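/- Duality for the shifted ratio system: let z0, z1, z2, z3, α1, α2 ∈ ℂ with α1 ≠ 0, α2 ≠ 0 and z0 − z1 ± α1, z1 − z2 ± α2, z2 − z3 ± α1, z3 − z0 ± α2 all nonzero, and suppose ((z0 − z1 + α1)(z2 − z3 + α1))/((z1 − z2 − α2)(z3 − z0 − α2)) = α1/α2. Let X0 ∈ ℂ \ {0} and set X1 := X0·(z0 − z1 + α1)/(z0 − z1 − α1), X2 := X1·(z1 − z2 + α2)/(z1 − z2 − α2), X3 := X2·(z2 − z3 + α1)/(z2 − z3 − α1). Then X0 = X3·(z3 − z0 + α2)/(z3 − z0 − α2), and the dual quadruple satisfies the cross-ratio equation ((X0 − X1)(X2 − X3))/((X1 − X2)(X3 − X0)) = α1/α2. -/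

import Mathlib

set_option maxHeartbeats 1600000


theorem shifted_ratio_duality
    (z0 z1 z2 z3 α1 α2 : ℂ)
    (hα1 : α1 ≠ 0) (hα2 : α2 ≠ 0)
    (h1p : z0 - z1 + α1 ≠ 0) (h1m : z0 - z1 - α1 ≠ 0)
    (h2p : z1 - z2 + α2 ≠ 0) (h2m : z1 - z2 - α2 ≠ 0)
    (h3p : z2 - z3 + α1 ≠ 0) (h3m : z2 - z3 - α1 ≠ 0)
    (h4p : z3 - z0 + α2 ≠ 0) (h4m : z3 - z0 - α2 ≠ 0)
    (hsr : (z0 - z1 + α1) * (z2 - z3 + α1) /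
        ((z1 - z2 - α2) * (z3 - z0 - α2)) = α1 / α2)
    (X0 X1 X2 X3 : ℂ) (hX0 : X0 ≠ 0)
    (hX1 : X1 = X0 * ((z0 - z1 + α1) / (z0 - z1 - α1)))
    (hX2 : X2 = X1 * ((z1 - z2 + α2) / (z1 - z2 - α2)))
    (hX3 : X3 = X2 * ((z2 - z3 + α1) / (z2 - z3 - α1))) :
    X0 = X3 * ((z3 - z0 + α2) / (z3 - z0 - α2)) ∧
      (X0 - X1) * (X2 - X3) / ((X1 - X2) * (X3 - X0)) = α1 / α2 := by
  have hP : α2 * ((z0 - z1 + α1) * (z2 - z3 + α1)) =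
      α1 * ((z1 - z2 - α2) * (z3 - z0 - α2)) := by
    field_simp at hsr
    linear_combination hsr
  have hX1' : X1 ≠ 0 := by
    rw [hX1]; exact mul_ne_zero hX0 (div_ne_zero h1p h1m)
  have hX2' : X2 ≠ 0 := by
    rw [hX2]; exact mul_ne_zero hX1' (div_ne_zero h2p h2m)
  have hX3' : X3 ≠ 0 := by
    rw [hX3]; exact mul_ne_zero hX2' (div_ne_zero h3p h3m)
  have part1 : X0 = X3 * ((z3 - z0 + α2) / (z3 - z0 - α2)) := by
    rw [hX3, hX2, hX1]
    field_simp
    ring_nf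
    linear_combination (2 * (z0 - z1 + (z2 - z3))) * hP
  refine ⟨part1, ?_⟩
  have d01 : X0 - X1 = X0 * (-2 * α1) / (z0 - z1 - α1) := by
    rw [hX1]; field_simp; ring
  have d12 : X1 - X2 = X1 * (-2 * α2) / (z1 - z2 - α2) := by
    rw [hX2]; field_simp; ring
  have d23 : X2 - X3 = X2 * (-2 * α1) / (z2 - z3 - α1) := by
    rw [hX3]; field_simp; ring
  have d30 : X3 - X0 = X3 * (-2 * α2) / (z3 - z0 - α2) := by
    rw [part1]; field_simp; ring
  have h2 : (-2 : ℂ) * α2 ≠ 0 := by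
    exact mul_ne_zero (by norm_num) hα2
  have hd12 : X1 - X2 ≠ 0 := by
    rw [d12, mul_div_assoc]
    exact mul_ne_zero hX1' (div_ne_zero h2 h2m)
  have hd30 : X3 - X0 ≠ 0 := by
    rw [d30, mul_div_assoc]
    exact mul_ne_zero hX3' (div_ne_zero h2 h4m)
  have hr : α1 * ((z1 - z2 - α2) * (z3 - z0 - α2)) =
      ((z0 - z1 + α1) / (z0 - z1 - α1)) * ((z2 - z3 + α1) / (z2 - z3 - α1)) *
        (α2 * ((z0 - z1 - α1) * (z2 - z3 - α1))) := by
    field_simp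
    linear_combination (-1 : ℂ) * hP
  have hM : X0 * X2 * (α1 * ((z1 - z2 - α2) * (z3 - z0 - α2))) =
      X1 * X3 * (α2 * ((z0 - z1 - α1) * (z2 - z3 - α1))) := by
    rw [hr, hX3, hX2, hX1]
    ring
  rw [div_eq_div_iff (mul_ne_zero hd12 hd30) hα2]
  rw [d01, d12, d23, d30]
  field_simp
  linear_combination hM
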